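/- For the dimension-instrumented counting-change relation, if cc(X, Y, Z, K) is derivable and Y ≥ 1 then K ≤ Y (the dimension is at most the number of kinds of coins). -/
import Mathlib


/-- Dimension-combination operation. -/
def d2 (a b : ℕ) : ℕ := if a = b then a + 1 else max a b

/-- Dimension-instrumented counting-change relation. -/
inductive cc : ℤ → ℤ → ℤ → ℕ → Prop
  | b1 {Y : ℤ} : Y > 0 → cc 0 Y 1 0
  | b2 {X Y : ℤ} : X < 0 → cc X Y 0 0
  | b3 {X Y : ℤ} : Y ≤ 0 → cc X Y 0 0
  | step {X Y A Z1 Z2 Z : ℤ} {K1 K2 K : ℕ} : X > 0 → A ≥ 1 → Y ≥ 1 →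
      cc (X - A) Y Z1 K1 → cc X (Y - 1) Z2 K2 → Z = Z1 + Z2 →
      K = d2 (d2 0 K1) K2 → cc X Y Z K

lemma cc_nonpos {X Y Z : ℤ} {K : ℕ} (h : cc X Y Z K) (hY : Y ≤ 0) : K = 0 := by
  cases h with
  | b1 hy => omega
  | b2 _ => rfl
  | b3 _ => rfl
  | step hx ha hy _ _ _ _ => omega

theorem cc_dim_le_coins {X Y Z : ℤ} {K : ℕ} (h : cc X Y Z K) (hY : Y ≥ 1) :
    (K : ℤ) ≤ Y := by
  induction h with
  | b1 hy => simp; omega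
  | b2 _ => simp; omega
  | b3 _ => simp; omega
  | @step X Y A Z1 Z2 Z K1 K2 K hx ha hy h1 h2 hz hk ih1 ih2 =>
    subst hk
    have hK1 : (K1 : ℤ) ≤ Y := ih1 hy
    simp only [d2]
    by_cases hY2 : (2 : ℤ) ≤ Y
    · have hK2 : (K2 : ℤ) ≤ Y - 1 := ih2 (by omega)
      split <;> split <;> omega
    · have hY1 : Y = 1 := by omega
      have hK2 : K2 = 0 := cc_nonpos h2 (by omega)
      subst hK2
      split <;> split <;> omega
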